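/- For all messages m, m' and every atomic key k, the normal form of the encrypted pair {m·m'}_k under the homomorphic rewrite relation equals the pair of the normal forms of the separately encrypted components: ({m·m'}_k)↓ = ({m}_k)↓ · ({m'}_k)↓. -/
import Mathlib


/-- Messages: the free term algebra generated by atoms under pairing and
encryption with atomic keys. -/
inductive Msg (A : Type) : Type
  | atom : A → Msg A
  | pair : Msg A → Msg A → Msg A
  | enc : Msg A → A → Msg A

/-- The homomorphic rewrite relation: smallest relation containing every
instance of `{m·m'}_k → {m}_k·{m'}_k` and closed under contexts. -/
inductive Rw {A : Type} : Msg A → Msg A → Prop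
  | homo (m m' : Msg A) (k : A) :
      Rw (.enc (.pair m m') k) (.pair (.enc m k) (.enc m' k))
  | pairL {m m' : Msg A} (n : Msg A) : Rw m m' → Rw (.pair m n) (.pair m' n)
  | pairR {m m' : Msg A} (n : Msg A) : Rw m m' → Rw (.pair n m) (.pair n m')
  | enc {m m' : Msg A} (k : A) : Rw m m' → Rw (.enc m k) (.enc m' k)

/-- A message is a normal form if no rewrite step applies to it. -/
def IsNormalForm {A : Type} (m : Msg A) : Prop := ∀ m' : Msg A, ¬ Rw m m'

/-- Push an encryption with key `k` through all pairs. -/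
def encPush {A : Type} (k : A) : Msg A → Msg A
  | .pair u v => .pair (encPush k u) (encPush k v)
  | t => .enc t k

/-- Canonical normalization function. -/
def canon {A : Type} : Msg A → Msg A
  | .atom a => .atom a
  | .pair u v => .pair (canon u) (canon v)
  | .enc u k => encPush k (canon u)

lemma canon_rw {A : Type} {m m' : Msg A} (h : Rw m m') : canon m = canon m' := by
  induction h with
  | homo m m' k => simp [canon, encPush]
  | pairL n _ ih => simp [canon, ih]
  | pairR n _ ih => simp [canon, ih]
  | enc k _ ih => simp [canon, ih]

lemma canon_rtg {A : Type} {m m' : Msg A}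
    (h : Relation.ReflTransGen Rw m m') : canon m = canon m' := by
  induction h with
  | refl => rfl
  | tail _ h ih => exact ih.trans (canon_rw h)

lemma canon_of_nf {A : Type} {m : Msg A} (h : IsNormalForm m) : canon m = m := by
  induction m with
  | atom a => rfl
  | pair u v ihu ihv =>
    have hu : IsNormalForm u := fun x hx => h _ (Rw.pairL v hx)
    have hv : IsNormalForm v := fun x hx => h _ (Rw.pairR u hx)
    simp [canon, ihu hu, ihv hv]
  | enc u k ihu =>
    have hu : IsNormalForm u := fun x hx => h _ (Rw.enc k hx)
    have : canon u = u := ihu hu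
    rw [canon, this]
    cases u with
    | pair a b => exact absurd (Rw.homo a b k) (h _)
    | atom a => rfl
    | enc a b => rfl

lemma nf_eq_canon {A : Type} (nf : Msg A → Msg A)
    (hnf : ∀ m : Msg A,
      Relation.ReflTransGen Rw m (nf m) ∧ IsNormalForm (nf m))
    (m : Msg A) : nf m = canon m := by
  obtain ⟨h1, h2⟩ := hnf m
  rw [← canon_of_nf h2, canon_rtg h1]

/-- The normal form of an encrypted pair is the pair of the normal forms of
the separately encrypted components:
`({m·m'}_k)↓ = ({m}_k)↓ · ({m'}_k)↓`. -/
theorem nf_enc_pair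
    (A : Type) [Countable A] (nf : Msg A → Msg A)
    (hnf : ∀ m : Msg A,
      Relation.ReflTransGen Rw m (nf m) ∧ IsNormalForm (nf m))
    (m m' : Msg A) (k : A) :
    nf (.enc (.pair m m') k) = .pair (nf (.enc m k)) (nf (.enc m' k)) := by
  simp only [nf_eq_canon nf hnf]
  simp [canon, encPush]
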